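/- Let q₁, q₂ be distributions over [n], let b ≥ max(‖q₁‖₂², ‖q₂‖₂²), let c₁, c₂, c₃ > 0, let τ > 0, and let s ≥ max(20000·c₂/c₁², √(20000·c₃)/c₁) · √b/τ. Let R be a real-valued random variable on some probability space with E[R] = c₁ s² ‖q₁ − q₂‖₂² and Var(R) ≤ c₂ s³ ‖q₁ − q₂‖₄² √b + c₃ s² b. Then: (i) if ‖q₁ − q₂‖₂² ≤ τ, then Pr[|R| ≤ 2 c₁ τ s²] ≥ 0.99; and (ii) if ‖q₁ − q₂‖₂² ≥ τ, then Pr[0.9·E[R] ≤ R ≤ 1.1·E[R]] ≥ 0.99. -/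

import Mathlib

open Finset MeasureTheory ProbabilityTheory

/-- A distribution over `[n]`: nonnegative values summing to 1. -/
def IsDist {n : ℕ} (p : Fin n → ℝ) : Prop :=
  (∀ i, 0 ≤ p i) ∧ ∑ i, p i = 1

lemma cheb_aux {Ω : Type*} [MeasurableSpace Ω] (μ : Measure Ω) [IsProbabilityMeasure μ]
    (R : Ω → ℝ) (hR : MemLp R 2 μ) (t : ℝ) (ht : 0 < t)
    (hv : variance R μ ≤ 0.01 * t ^ 2) (S : Set Ω)
    (hS : ∀ ω, |R ω - μ[R]| < t → ω ∈ S) :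
    ENNReal.ofReal 0.99 ≤ μ S := by
  set A : Set Ω := {ω | t ≤ |R ω - μ[R]|} with hA
  have h1 : μ A ≤ ENNReal.ofReal 0.01 := by
    refine (meas_ge_le_variance_div_sq hR ht).trans (ENNReal.ofReal_le_ofReal ?_)
    rw [div_le_iff₀ (by positivity)]
    linarith [hv]
  have hsub : Aᶜ ⊆ S := fun ω hω => hS ω (lt_of_not_ge hω)
  refine le_trans ?_ (measure_mono hsub)
  have h2 : (1 : ENNReal) ≤ μ A + μ Aᶜ := by
    have h := measure_union_le (μ := μ) A Aᶜ
    rwa [Set.union_compl_self, measure_univ] at h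
  have h3 : (1 : ENNReal) ≤ ENNReal.ofReal 0.01 + μ Aᶜ := h2.trans (add_le_add_left h1 _)
  have h4 : (1 : ENNReal) - ENNReal.ofReal 0.01 ≤ μ Aᶜ := tsub_le_iff_left.mpr h3
  refine le_trans (le_of_eq ?_) h4
  rw [← ENNReal.ofReal_one, ← ENNReal.ofReal_sub _ (by norm_num)]
  norm_num

theorem stmt11 {n : ℕ} (q₁ q₂ : Fin n → ℝ) (hq₁ : IsDist q₁) (hq₂ : IsDist q₂)
    (b c₁ c₂ c₃ τ s : ℝ)
    (hb : max (∑ i, q₁ i ^ 2) (∑ i, q₂ i ^ 2) ≤ b)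
    (hc₁ : 0 < c₁) (hc₂ : 0 < c₂) (hc₃ : 0 < c₃) (hτ : 0 < τ)
    (hs : max (20000 * c₂ / c₁ ^ 2) (Real.sqrt (20000 * c₃) / c₁) * Real.sqrt b / τ ≤ s)
    {Ω : Type*} [MeasurableSpace Ω] (μ : Measure Ω) [IsProbabilityMeasure μ]
    (R : Ω → ℝ) (hR : MemLp R 2 μ)
    (hmean : μ[R] = c₁ * s ^ 2 * ∑ i, (q₁ i - q₂ i) ^ 2)
    (hvar : variance R μ ≤ c₂ * s ^ 3 * Real.sqrt (∑ i, (q₁ i - q₂ i) ^ 4) * Real.sqrt b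
        + c₃ * s ^ 2 * b) :
    ((∑ i, (q₁ i - q₂ i) ^ 2 ≤ τ →
        ENNReal.ofReal 0.99 ≤ μ {ω | |R ω| ≤ 2 * c₁ * τ * s ^ 2}) ∧
      (τ ≤ ∑ i, (q₁ i - q₂ i) ^ 2 →
        ENNReal.ofReal 0.99 ≤ μ {ω | 0.9 * μ[R] ≤ R ω ∧ R ω ≤ 1.1 * μ[R]})) := by
  set Δ : ℝ := ∑ i, (q₁ i - q₂ i) ^ 2 with hΔdef
  set Q : ℝ := Real.sqrt (∑ i, (q₁ i - q₂ i) ^ 4) with hQdef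
  have hΔ0 : 0 ≤ Δ := Finset.sum_nonneg fun i _ => sq_nonneg _
  have hQ0 : 0 ≤ Q := Real.sqrt_nonneg _
  -- b is positive
  have hb0 : 0 < b := by
    have h1 : 0 < ∑ i, q₁ i ^ 2 := by
      by_contra h
      push_neg at h
      have hz : ∑ i, q₁ i ^ 2 = 0 :=
        le_antisymm h (Finset.sum_nonneg fun i _ => sq_nonneg _)
      have h2 : ∀ i ∈ Finset.univ, q₁ i ^ 2 = 0 :=
        (Finset.sum_eq_zero_iff_of_nonneg fun i _ => sq_nonneg _).mp hz
      have h3 : ∑ i, q₁ i = 0 := by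
        refine Finset.sum_eq_zero fun i hi => ?_
        exact pow_eq_zero_iff (n := 2) (by norm_num) |>.mp (h2 i hi)
      rw [hq₁.2] at h3; norm_num at h3
    exact h1.trans_le ((le_max_left _ _).trans hb)
  have hsb : 0 < Real.sqrt b := Real.sqrt_pos.mpr hb0
  set M : ℝ := max (20000 * c₂ / c₁ ^ 2) (Real.sqrt (20000 * c₃) / c₁) with hM
  have hM0 : 0 < M := lt_max_of_lt_left (by positivity)
  -- s is positive
  have hs0 : 0 < s := lt_of_lt_of_le (by positivity) hs
  -- key consequences of hs
  have hkey : ∀ a : ℝ, 0 ≤ a → a ≤ M → a * Real.sqrt b ≤ s * τ := by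
    intro a ha0 ha
    have h1 : a * Real.sqrt b / τ ≤ M * Real.sqrt b / τ := by gcongr
    have h2 := h1.trans hs
    rw [div_le_iff₀ hτ] at h2
    linarith
  have hs1 : 20000 * c₂ * Real.sqrt b ≤ c₁ ^ 2 * (s * τ) := by
    have hk := hkey (20000 * c₂ / c₁ ^ 2) (by positivity) (le_max_left _ _)
    have h := mul_le_mul_of_nonneg_left hk (sq_nonneg c₁)
    have e : c₁ ^ 2 * (20000 * c₂ / c₁ ^ 2 * Real.sqrt b) = 20000 * c₂ * Real.sqrt b := by
      field_simp
    linarith [e ▸ h]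
  have hs2 : 20000 * c₃ * b ≤ c₁ ^ 2 * (s * τ) ^ 2 := by
    have hk := hkey (Real.sqrt (20000 * c₃) / c₁) (by positivity) (le_max_right _ _)
    have hsq : (Real.sqrt (20000 * c₃) / c₁ * Real.sqrt b) ^ 2 ≤ (s * τ) ^ 2 :=
      pow_le_pow_left₀ (by positivity) hk 2
    rw [mul_pow, div_pow, Real.sq_sqrt (by positivity : (0:ℝ) ≤ 20000 * c₃),
      Real.sq_sqrt hb0.le] at hsq
    rw [div_mul_eq_mul_div, div_le_iff₀ (by positivity)] at hsq
    linarith [hsq]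
  -- Q ≤ Δ
  have hQ4 : Q ≤ Δ := by
    have h1 : ∑ i, (q₁ i - q₂ i) ^ 4 ≤ Δ ^ 2 := by
      have h := Finset.sum_sq_le_sq_sum_of_nonneg
        (s := Finset.univ) (f := fun i => (q₁ i - q₂ i) ^ 2) (fun i _ => sq_nonneg _)
      calc ∑ i, (q₁ i - q₂ i) ^ 4 = ∑ i, ((q₁ i - q₂ i) ^ 2) ^ 2 := by
            refine Finset.sum_congr rfl fun i _ => ?_; ring
        _ ≤ (∑ i, (q₁ i - q₂ i) ^ 2) ^ 2 := h
        _ = Δ ^ 2 := rfl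
    calc Q ≤ Real.sqrt (Δ ^ 2) := Real.sqrt_le_sqrt h1
      _ = Δ := Real.sqrt_sq hΔ0
  constructor
  · -- case (i)
    intro hcase
    have ht : 0 < c₁ * τ * s ^ 2 := by positivity
    refine cheb_aux μ R hR (c₁ * τ * s ^ 2) ht ?_ _ ?_
    · -- variance bound
      have hv1 : c₂ * s ^ 3 * Q * Real.sqrt b ≤ c₁ ^ 2 * s ^ 4 * τ ^ 2 / 20000 := by
        have hQτ : Q ≤ τ := hQ4.trans hcase
        calc c₂ * s ^ 3 * Q * Real.sqrt b ≤ c₂ * s ^ 3 * τ * Real.sqrt b := by gcongr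
          _ = 20000 * c₂ * Real.sqrt b * (s ^ 3 * τ / 20000) := by ring
          _ ≤ c₁ ^ 2 * (s * τ) * (s ^ 3 * τ / 20000) := by gcongr
          _ = c₁ ^ 2 * s ^ 4 * τ ^ 2 / 20000 := by ring
      have hv2 : c₃ * s ^ 2 * b ≤ c₁ ^ 2 * s ^ 4 * τ ^ 2 / 20000 := by
        calc c₃ * s ^ 2 * b = 20000 * c₃ * b * (s ^ 2 / 20000) := by ring
          _ ≤ c₁ ^ 2 * (s * τ) ^ 2 * (s ^ 2 / 20000) := by gcongr
          _ = c₁ ^ 2 * s ^ 4 * τ ^ 2 / 20000 := by ring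
      have hfin : c₁ ^ 2 * s ^ 4 * τ ^ 2 / 10000 ≤ 0.01 * (c₁ * τ * s ^ 2) ^ 2 := by
        nlinarith [mul_pos (mul_pos (pow_pos hc₁ 2) (pow_pos hs0 4)) (pow_pos hτ 2)]
      linarith [hvar]
    · intro ω hω
      simp only [Set.mem_setOf_eq]
      have hE0 : 0 ≤ μ[R] := by rw [hmean]; positivity
      have hE1 : μ[R] ≤ c₁ * s ^ 2 * τ := by
        rw [hmean]; gcongr
      obtain ⟨h1, h2⟩ := abs_lt.mp hω
      rw [abs_le]
      constructor <;> linarith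
  · -- case (ii)
    intro hcase
    have hΔpos : 0 < Δ := hτ.trans_le hcase
    have ht : 0 < 0.1 * (c₁ * s ^ 2 * Δ) := by positivity
    refine cheb_aux μ R hR (0.1 * (c₁ * s ^ 2 * Δ)) ht ?_ _ ?_
    · have hv1 : c₂ * s ^ 3 * Q * Real.sqrt b ≤ c₁ ^ 2 * s ^ 4 * Δ ^ 2 / 20000 := by
        calc c₂ * s ^ 3 * Q * Real.sqrt b ≤ c₂ * s ^ 3 * Δ * Real.sqrt b := by gcongr
          _ = 20000 * c₂ * Real.sqrt b * (s ^ 3 * Δ / 20000) := by ring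
          _ ≤ c₁ ^ 2 * (s * τ) * (s ^ 3 * Δ / 20000) := by gcongr
          _ = c₁ ^ 2 * s ^ 4 * τ * Δ / 20000 := by ring
          _ ≤ c₁ ^ 2 * s ^ 4 * Δ * Δ / 20000 := by gcongr
          _ = c₁ ^ 2 * s ^ 4 * Δ ^ 2 / 20000 := by ring
      have hv2 : c₃ * s ^ 2 * b ≤ c₁ ^ 2 * s ^ 4 * Δ ^ 2 / 20000 := by
        calc c₃ * s ^ 2 * b = 20000 * c₃ * b * (s ^ 2 / 20000) := by ring
          _ ≤ c₁ ^ 2 * (s * τ) ^ 2 * (s ^ 2 / 20000) := by gcongr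
          _ = c₁ ^ 2 * s ^ 4 * τ ^ 2 / 20000 := by ring
          _ ≤ c₁ ^ 2 * s ^ 4 * Δ ^ 2 / 20000 := by gcongr
      have hfin : c₁ ^ 2 * s ^ 4 * Δ ^ 2 / 10000 ≤ 0.01 * (0.1 * (c₁ * s ^ 2 * Δ)) ^ 2 :=
        le_of_eq (by ring)
      linarith [hvar]
    · intro ω hω
      simp only [Set.mem_setOf_eq]
      rw [hmean] at hω ⊢
      obtain ⟨h1, h2⟩ := abs_lt.mp hω
      constructor <;> linarith
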